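/- For the weighted Laplacian A_n of the complete graph Kₙ with symmetric weights w_{ij}, the principal minor det(Ã_n), where Ã_n is A_n with the first row and first column deleted, equals the spanning-tree polynomial T_n(w) = Σ_{trees t on {1,...,n}} Π_{{i,j}∈E(t)} w_{ij}. -/

import Mathlib

open Finset

/-- The weighted Laplacian matrix of the complete graph `Kₙ`:
off-diagonal entries `-w i j`, diagonal entries `Σ_{k ≠ i} w i k`. -/
noncomputable def lap (n : ℕ) (w : Fin n → Fin n → ℂ) : Matrix (Fin n) (Fin n) ℂ :=
  fun i j => if i = j then ∑ k ∈ univ.erase i, w i k else -w i j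

open scoped Classical in
/-- The spanning-tree polynomial `T_n(w) = Σ_{trees t on {1,…,n}} Π_{edges {i,j} of t} w i j`. -/
noncomputable def treePoly (n : ℕ) (w : Fin n → Fin n → ℂ) : ℂ :=
  ∑ t ∈ univ.filter (fun t : SimpleGraph (Fin n) => t.IsTree),
    ∏ p ∈ univ.filter (fun p : Fin n × Fin n => p.1 < p.2 ∧ t.Adj p.1 p.2), w p.1 p.2

section
variable {n : ℕ}



def gh (f : Fin n → Fin (n+1)) : Fin (n+1) → Fin (n+1) := Fin.cases 0 f

@[simp] lemma gh_zero (f : Fin n → Fin (n+1)) : gh f 0 = 0 := rfl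
@[simp] lemma gh_succ (f : Fin n → Fin (n+1)) (i : Fin n) : gh f i.succ = f i := rfl

def Acyc (f : Fin n → Fin (n+1)) : Prop := ∀ x, ∃ m, (gh f)^[m] x = 0

def Mm (f : Fin n → Fin (n+1)) : Matrix (Fin n) (Fin n) ℂ :=
  fun i j => (if i = j then 1 else 0) - (if f i = Fin.succ j then 1 else 0)

lemma gh_iter_zero (f : Fin n → Fin (n+1)) {x : Fin (n+1)} {m m' : ℕ}
    (h : (gh f)^[m] x = 0) (hm : m ≤ m') : (gh f)^[m'] x = 0 := by
  obtain ⟨k, rfl⟩ := Nat.exists_eq_add_of_le hm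
  rw [Nat.add_comm m k, Function.iterate_add_apply, h]
  exact Function.iterate_fixed rfl k

lemma no_cycle (f : Fin n → Fin (n+1)) (hf : Acyc f) {x : Fin (n+1)} (hx : x ≠ 0)
    {p : ℕ} (hp : 0 < p) (hcyc : (gh f)^[p] x = x) : False := by
  obtain ⟨m, hm⟩ := hf x
  have key : ∀ k : ℕ, (gh f)^[k * p] x = x := by
    intro k
    induction k with
    | zero => simp
    | succ k ih => rw [Nat.succ_mul, Function.iterate_add_apply, hcyc, ih]
  have h1 : (gh f)^[m * p] x = 0 := gh_iter_zero f hm (Nat.le_mul_of_pos_right m hp)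
  rw [key m] at h1
  exact hx h1

lemma detMm_zero (f : Fin n → Fin (n+1)) (hf : ¬ Acyc f) : (Mm f).det = 0 := by
  rw [← Matrix.exists_vecMul_eq_zero_iff]
  simp only [Acyc, not_forall, not_exists] at hf
  obtain ⟨x, hx⟩ := hf
  set g := gh f with hg
  -- pigeonhole
  obtain ⟨a, b, hab, he⟩ := Fintype.exists_ne_map_eq_of_card_lt
    (fun m : Fin (n+2) => g^[(m : ℕ)] x) (by simp)
  wlog hlt : (a : ℕ) < (b : ℕ) generalizing a b
  · have hne : (a : ℕ) ≠ (b : ℕ) := fun h => hab (Fin.ext h)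
    exact this b a hab.symm he.symm (by omega)
  set y := g^[(a : ℕ)] x with hy
  set p := (b : ℕ) - (a : ℕ) with hpdef
  have hp : 0 < p := by omega
  have hyp : g^[p] y = y := by
    rw [hy, ← Function.iterate_add_apply]
    have : p + (a : ℕ) = (b : ℕ) := by omega
    rw [this, ← he]
  have hiter0 : ∀ t : ℕ, g^[t] y ≠ 0 := by
    intro t
    rw [hy, ← Function.iterate_add_apply]
    exact hx _
  set C : Finset (Fin (n+1)) := (Finset.range p).image (fun t => g^[t] y) with hC
  have h0C : (0 : Fin (n+1)) ∉ C := by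
    simp only [hC, Finset.mem_image, Finset.mem_range]
    rintro ⟨t, -, ht⟩
    exact hiter0 t ht
  have hyC : y ∈ C := by
    simp only [hC, Finset.mem_image, Finset.mem_range]
    exact ⟨0, hp, rfl⟩
  have hmapsub : C.image g ⊆ C := by
    intro z hz
    simp only [hC, Finset.mem_image, Finset.mem_range] at hz ⊢
    obtain ⟨u, ⟨t, ht, hu⟩, rfl⟩ := hz
    rcases Nat.lt_or_ge (t+1) p with h' | h'
    · exact ⟨t+1, h', by rw [← hu, Function.iterate_succ_apply']⟩
    · have : t + 1 = p := by omega
      refine ⟨0, hp, ?_⟩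
      rw [← hu, Function.iterate_zero_apply, ← Function.iterate_succ_apply' g t y,
        Nat.succ_eq_add_one, this, hyp]
  have hsub : C ⊆ C.image g := by
    intro z hz
    simp only [hC, Finset.mem_image, Finset.mem_range] at hz ⊢
    obtain ⟨t, ht, rfl⟩ := hz
    rcases Nat.eq_zero_or_pos t with rfl | ht0
    · refine ⟨g^[p-1] y, ⟨p-1, by omega, rfl⟩, ?_⟩
      rw [← Function.iterate_succ_apply' g (p-1) y, Nat.succ_eq_add_one,
        show p - 1 + 1 = p by omega, hyp, Function.iterate_zero_apply]
    · refine ⟨g^[t-1] y, ⟨t-1, by omega, rfl⟩, ?_⟩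
      rw [← Function.iterate_succ_apply' g (t-1) y, Nat.succ_eq_add_one]
      congr 1
      omega
  have himg : C.image g = C := Finset.Subset.antisymm hmapsub hsub
  have hinj : Set.InjOn g C := by
    apply Finset.injOn_of_card_image_eq
    rw [himg]
  set s : Finset (Fin n) := univ.filter (fun i => i.succ ∈ C) with hs
  have hCs : C = s.image Fin.succ := by
    ext z
    simp only [hs, Finset.mem_image, Finset.mem_filter, Finset.mem_univ, true_and]
    constructor
    · intro hz
      have hz0 : z ≠ 0 := fun h => h0C (h ▸ hz)
      exact ⟨z.pred hz0, by rwa [Fin.succ_pred], Fin.succ_pred _ _⟩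
    · rintro ⟨i, hi, rfl⟩; exact hi
  refine ⟨fun i => if i.succ ∈ C then 1 else 0, ?_, ?_⟩
  · have hy0 : y ≠ 0 := hiter0 0
    intro hv
    have := congrFun hv (y.pred hy0)
    rw [Fin.succ_pred] at this
    simp [hyC] at this
  · funext j
    show (∑ i, (if i.succ ∈ C then (1:ℂ) else 0) * Mm f i j) = 0
    have hsum : ∀ F : Fin n → ℂ, (∑ i, (if i.succ ∈ C then (1:ℂ) else 0) * F i) = ∑ i ∈ s, F i := by
      intro F
      rw [Finset.sum_filter]
      apply Finset.sum_congr rfl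
      intro i _
      by_cases h : i.succ ∈ C <;> simp [h]
    rw [hsum]
    simp only [Mm]
    rw [Finset.sum_sub_distrib]
    have h1 : (∑ i ∈ s, if i = j then (1:ℂ) else 0) = if j.succ ∈ C then 1 else 0 := by
      rw [Finset.sum_ite_eq' s j (fun _ => (1:ℂ))]
      simp [hs]
    have h2 : (∑ i ∈ s, if f i = Fin.succ j then (1:ℂ) else 0) = if j.succ ∈ C then 1 else 0 := by
      have e1 : (∑ i ∈ s, if f i = Fin.succ j then (1:ℂ) else 0)
          = ∑ z ∈ C, if g z = Fin.succ j then (1:ℂ) else 0 := by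
        rw [hCs, Finset.sum_image (fun a _ b _ h => Fin.succ_injective _ h)]
        rfl
      rw [e1, ← Finset.sum_image (f := fun u => if u = Fin.succ j then (1:ℂ) else 0) hinj, himg,
        Finset.sum_ite_eq' C (Fin.succ j) (fun _ => (1:ℂ))]
    rw [h1, h2, sub_self]

lemma detMm_one (f : Fin n → Fin (n+1)) (hf : Acyc f) : (Mm f).det = 1 := by
  classical
  set g := gh f with hg
  have hfi : ∀ i : Fin n, f i ≠ i.succ := by
    intro i h
    exact no_cycle f hf (Fin.succ_ne_zero i) (p := 1) one_pos (by simp [hg, h])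
  set ρ : Fin (n+1) → ℕ := fun x => Nat.find (hf x) with hρ
  have hρstep : ∀ i j : Fin n, f i = j.succ → ρ j.succ < ρ i.succ := by
    intro i j hij
    have h0 : g^[ρ i.succ] i.succ = 0 := Nat.find_spec (hf i.succ)
    have hpos : 0 < ρ i.succ := by
      rcases Nat.eq_zero_or_pos (ρ i.succ) with h | h
      · exfalso; rw [h] at h0; exact Fin.succ_ne_zero i h0
      · exact h
    have : g^[ρ i.succ - 1] j.succ = 0 := by
      have := h0
      rw [show ρ i.succ = (ρ i.succ - 1) + 1 by omega, Function.iterate_succ_apply] at this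
      rwa [show g i.succ = j.succ by simp [hg, hij]] at this
    have h5 : ρ j.succ ≤ ρ i.succ - 1 := Nat.find_le this
    omega
  set b : Fin n → ℕᵒᵈ := fun i => OrderDual.toDual (ρ i.succ) with hb
  have hbt : (Mm f).BlockTriangular b := by
    intro i j hij
    have h1 : ρ i.succ < ρ j.succ := hij
    have h2 : i ≠ j := fun h => by rw [h] at h1; exact lt_irrefl _ h1
    have h3 : f i ≠ j.succ := fun h => by have := hρstep i j h; omega
    simp [Mm, h2, h3]
  rw [hbt.det]
  apply Finset.prod_eq_one
  intro k _
  have : (Mm f).toSquareBlock b k = 1 := by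
    ext ⟨i, hi⟩ ⟨j, hj⟩
    by_cases h : i = j
    · subst h
      simp [Matrix.toSquareBlock_def, Mm, hfi i, Matrix.one_apply]
    · have hρeq : ρ i.succ = ρ j.succ := by
        have h6 : OrderDual.toDual (ρ i.succ) = OrderDual.toDual (ρ j.succ) := hi.trans hj.symm
        exact congrArg OrderDual.ofDual h6
      have hij : f i ≠ j.succ := by
        intro he
        have := hρstep i j he
        omega
      simp [Matrix.toSquareBlock_def, Mm, h, hij, Matrix.one_apply, Subtype.ext_iff]
  rw [this, Matrix.det_one]

/-- The graph associated to a parent function. -/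
def Gf (f : Fin n → Fin (n+1)) : SimpleGraph (Fin (n+1)) :=
  SimpleGraph.fromRel (fun a b => gh f a = b)

lemma adj_Gf (f : Fin n → Fin (n+1)) (a b : Fin (n+1)) :
    (Gf f).Adj a b ↔ a ≠ b ∧ (gh f a = b ∨ gh f b = a) :=
  SimpleGraph.fromRel_adj _ a b

lemma gh_fix (f : Fin n → Fin (n+1)) {x : Fin (n+1)} {m : ℕ} (hm : (gh f)^[m] x = 0)
    (hfix : gh f x = x) : x = 0 := by
  rw [← hm]
  exact (Function.iterate_fixed hfix m).symm

lemma reach0 (f : Fin n → Fin (n+1)) {x : Fin (n+1)} {m : ℕ} (hm : (gh f)^[m] x = 0) :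
    (Gf f).Reachable x 0 := by
  induction m generalizing x with
  | zero => exact hm ▸ SimpleGraph.Reachable.refl x
  | succ m ih =>
    by_cases hx : x = 0
    · exact hx ▸ SimpleGraph.Reachable.refl _
    · have hadj : (Gf f).Adj x (gh f x) := by
        rw [adj_Gf]
        exact ⟨fun h => hx (gh_fix f hm h.symm), Or.inl rfl⟩
      exact hadj.reachable.trans (ih (by rwa [← Function.iterate_succ_apply]))

lemma Gf_connected (f : Fin n → Fin (n+1)) (hf : Acyc f) : (Gf f).Connected := by
  have h : ∀ x, (Gf f).Reachable x 0 := by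
    intro x
    obtain ⟨m, hm⟩ := hf x
    exact reach0 f hm
  have hne : Nonempty (Fin (n+1)) := ⟨0⟩
  exact SimpleGraph.Connected.mk (fun u v => (h u).trans (h v).symm)

/-- descendant invariant along walks avoiding the edge `s(v, gh v)`. -/
lemma desc_invariant (f : Fin n → Fin (n+1)) (hf : Acyc f) (v : Fin (n+1)) (hv : v ≠ 0)
    {a b : Fin (n+1)} (p : (Gf f).Walk a b) (hp : s(v, gh f v) ∉ p.edges) :
    ((∃ k, (gh f)^[k] a = v) ↔ (∃ k, (gh f)^[k] b = v)) := by
  induction p with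
  | nil => rfl
  | @cons a c b h p ih =>
    rw [SimpleGraph.Walk.edges_cons, List.mem_cons] at hp
    push_neg at hp
    obtain ⟨hne, hrest⟩ := hp
    rw [← ih hrest]
    rw [adj_Gf] at h
    obtain ⟨hac, hor⟩ := h
    -- a one-step invariance
    have step : ∀ z u : Fin (n+1), z ≠ u → gh f z = u → s(v, gh f v) ≠ s(z, u) →
        ((∃ k, (gh f)^[k] z = v) ↔ (∃ k, (gh f)^[k] u = v)) := by
      intro z u hzu hgz hnedge
      constructor
      · rintro ⟨k, hk⟩
        rcases Nat.eq_zero_or_pos k with rfl | hk0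
        · -- z = v, so u = gh v, edge is the forbidden one
          exfalso
          apply hnedge
          simp only [Function.iterate_zero_apply] at hk
          subst hk
          rw [hgz]
        · refine ⟨k - 1, ?_⟩
          rw [← hk, ← hgz, ← Function.iterate_succ_apply, Nat.succ_eq_add_one]
          congr 1
          omega
      · rintro ⟨k, hk⟩
        exact ⟨k + 1, by rw [Function.iterate_succ_apply, hgz, hk]⟩
    rcases hor with hgz | hgz
    · exact step a c hac hgz hne
    · exact (step c a (Ne.symm hac) hgz (fun hcon => hne (hcon.trans (Sym2.eq_swap)))).symm

lemma Gf_acyclic (f : Fin n → Fin (n+1)) (hf : Acyc f) : (Gf f).IsAcyclic := by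
  rw [SimpleGraph.isAcyclic_iff_forall_adj_isBridge]
  intro x y hxy
  -- wlog : gh f x = y
  have key : ∀ u v : Fin (n+1), (Gf f).Adj u v → gh f u = v → (Gf f).IsBridge s(u, v) := by
    intro u v hadj hgu
    rw [SimpleGraph.isBridge_iff_adj_and_forall_walk_mem_edges]
    refine fun p => ?_
    by_contra hout
    have hu0 : u ≠ 0 := by
      rintro rfl
      rw [gh_zero] at hgu
      exact hadj.ne (hgu.symm ▸ rfl)
    have := desc_invariant f hf u hu0 p (by rwa [hgu])
    -- u is a descendant of u, v = gh u is not
    have hdu : ∃ k, (gh f)^[k] u = u := ⟨0, rfl⟩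
    have hdv : ¬ (∃ k, (gh f)^[k] v = u) := by
      rintro ⟨k, hk⟩
      refine no_cycle f hf hu0 (p := k + 1) (Nat.succ_pos k) ?_
      rw [Function.iterate_succ_apply, hgu, hk]
    exact hdv (this.mp hdu)
  rcases (adj_Gf f x y).mp hxy |>.2 with h | h
  · exact key x y hxy h
  · rw [Sym2.eq_swap]
    exact key y x hxy.symm h

lemma Gf_isTree (f : Fin n → Fin (n+1)) (hf : Acyc f) : (Gf f).IsTree :=
  ⟨Gf_connected f hf, Gf_acyclic f hf⟩

noncomputable def pathTo (t : SimpleGraph (Fin (n+1))) (ht : t.IsTree) (x : Fin (n+1)) :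
    t.Walk x 0 :=
  (ht.existsUnique_path x 0).choose

lemma pathTo_isPath (t : SimpleGraph (Fin (n+1))) (ht : t.IsTree) (x : Fin (n+1)) :
    (pathTo t ht x).IsPath :=
  (ht.existsUnique_path x 0).choose_spec.1

lemma pathTo_unique (t : SimpleGraph (Fin (n+1))) (ht : t.IsTree) {x : Fin (n+1)}
    (q : t.Walk x 0) (hq : q.IsPath) : q = pathTo t ht x :=
  (ht.existsUnique_path x 0).choose_spec.2 q hq

open scoped Classical in
noncomputable def par (t : SimpleGraph (Fin (n+1))) (x : Fin (n+1)) : Fin (n+1) :=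
  if ht : t.IsTree then (pathTo t ht x).getVert 1 else 0

lemma par_eq (t : SimpleGraph (Fin (n+1))) (ht : t.IsTree) (x : Fin (n+1)) :
    par t x = (pathTo t ht x).getVert 1 := dif_pos ht

/-- generic walk lemma : for a path from `x ≠ 0` to `0`, the start is adjacent to the
second vertex, and the rest is a shorter path. -/
lemma path_step {t : SimpleGraph (Fin (n+1))} {x : Fin (n+1)} (hx : x ≠ 0)
    (p : t.Walk x 0) (hp : p.IsPath) :
    t.Adj x (p.getVert 1) ∧
      ∃ q : t.Walk (p.getVert 1) 0, q.IsPath ∧ q.length + 1 = p.length := by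
  cases p with
  | nil => exact absurd rfl hx
  | cons h q =>
    rw [SimpleGraph.Walk.getVert_cons_succ, SimpleGraph.Walk.getVert_zero]
    exact ⟨h, q, hp.of_cons, by simp⟩

lemma par_adj {t : SimpleGraph (Fin (n+1))} (ht : t.IsTree) {x : Fin (n+1)} (hx : x ≠ 0) :
    t.Adj x (par t x) := by
  rw [par_eq t ht]
  exact (path_step hx (pathTo t ht x) (pathTo_isPath t ht x)).1

/-- the parent function of a tree -/
noncomputable def fpar (t : SimpleGraph (Fin (n+1))) : Fin n → Fin (n+1) :=
  fun i => par t i.succ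

lemma gh_fpar (t : SimpleGraph (Fin (n+1))) {x : Fin (n+1)} (hx : x ≠ 0) :
    gh (fpar t) x = par t x := by
  rw [← Fin.succ_pred x hx, gh_succ]
  rfl

lemma pathTo_par_lt {t : SimpleGraph (Fin (n+1))} (ht : t.IsTree) {x : Fin (n+1)} (hx : x ≠ 0) :
    (pathTo t ht (par t x)).length + 1 = (pathTo t ht x).length := by
  obtain ⟨-, q, hq, hlen⟩ := path_step hx (pathTo t ht x) (pathTo_isPath t ht x)
  rw [par_eq t ht]
  rw [pathTo_unique t ht q hq] at hlen
  exact hlen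

lemma acyc_fpar {t : SimpleGraph (Fin (n+1))} (ht : t.IsTree) : Acyc (fpar t) := by
  suffices H : ∀ N (x : Fin (n+1)), (pathTo t ht x).length ≤ N → ∃ m, (gh (fpar t))^[m] x = 0 by
    intro x
    exact H (pathTo t ht x).length x le_rfl
  intro N
  induction N with
  | zero =>
    intro x hx
    have : x = 0 := SimpleGraph.Walk.eq_of_length_eq_zero (Nat.le_zero.mp hx)
    exact ⟨0, this⟩
  | succ N ih =>
    intro x hx
    by_cases h0 : x = 0
    · exact ⟨0, h0⟩
    · have hlt := pathTo_par_lt ht h0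
      obtain ⟨m, hm⟩ := ih (par t x) (by omega)
      refine ⟨m + 1, ?_⟩
      rw [Function.iterate_succ_apply, gh_fpar t h0, hm]

lemma adj_iff_par {t : SimpleGraph (Fin (n+1))} (ht : t.IsTree) (a b : Fin (n+1)) :
    t.Adj a b ↔ a ≠ b ∧ (gh (fpar t) a = b ∨ gh (fpar t) b = a) := by
  constructor
  · intro hadj
    refine ⟨hadj.ne, ?_⟩
    by_cases hmem : a ∈ (pathTo t ht b).support
    · -- then par b = a
      right
      have hb0 : b ≠ 0 := by
        rintro rfl
        have : (SimpleGraph.Walk.nil : t.Walk 0 0) = pathTo t ht 0 :=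
          pathTo_unique t ht _ SimpleGraph.Walk.IsPath.nil
        rw [← this, SimpleGraph.Walk.support_nil] at hmem
        simp at hmem
        exact hadj.ne (hmem ▸ rfl)
      rw [gh_fpar t hb0, par_eq t ht]
      -- takeUntil is the single edge
      have htake : ((pathTo t ht b).takeUntil a hmem) = SimpleGraph.Walk.cons hadj.symm SimpleGraph.Walk.nil := by
        have h1 : ((pathTo t ht b).takeUntil a hmem).IsPath :=
          (pathTo_isPath t ht b).takeUntil hmem
        have h2 : (SimpleGraph.Walk.cons hadj.symm SimpleGraph.Walk.nil : t.Walk b a).IsPath := by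
          apply SimpleGraph.Walk.IsPath.cons SimpleGraph.Walk.IsPath.nil
          simp [SimpleGraph.Walk.support_nil]
          exact hadj.ne'
        obtain ⟨p', hp', hup'⟩ := ht.existsUnique_path b a
        rw [hup' _ h1, hup' _ h2]
      have hspec := (pathTo t ht b).take_spec hmem
      rw [← hspec, SimpleGraph.Walk.getVert_append, htake]
      simp
    · -- then par a = b
      left
      have ha0 : a ≠ 0 := by
        rintro rfl
        exact hmem ((pathTo t ht b).end_mem_support)
      rw [gh_fpar t ha0, par_eq t ht]
      have : SimpleGraph.Walk.cons hadj (pathTo t ht b) = pathTo t ht a :=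
        pathTo_unique t ht _ (SimpleGraph.Walk.IsPath.cons (pathTo_isPath t ht b) hmem)
      rw [← this, SimpleGraph.Walk.getVert_cons_succ, SimpleGraph.Walk.getVert_zero]
  · rintro ⟨hab, h | h⟩
    · have ha0 : a ≠ 0 := by
        rintro rfl
        rw [gh_zero] at h
        exact hab h
      rw [gh_fpar t ha0] at h
      exact h ▸ par_adj ht ha0
    · have hb0 : b ≠ 0 := by
        rintro rfl
        rw [gh_zero] at h
        exact hab h.symm
      rw [gh_fpar t hb0] at h
      exact (h ▸ par_adj ht hb0).symm

lemma Gf_fpar {t : SimpleGraph (Fin (n+1))} (ht : t.IsTree) : Gf (fpar t) = t := by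
  ext a b
  rw [adj_Gf, adj_iff_par ht]

lemma iter_walk (f : Fin n → Fin (n+1)) (hf : Acyc f) :
    ∀ (m : ℕ) (x : Fin (n+1)), (gh f)^[m] x = 0 →
      ∃ q : (Gf f).Walk x 0, q.IsPath ∧ (∀ z ∈ q.support, ∃ k, z = (gh f)^[k] x) ∧
        (x ≠ 0 → q.getVert 1 = gh f x) := by
  intro m
  induction m with
  | zero =>
    intro x hx
    subst hx
    exact ⟨SimpleGraph.Walk.nil, SimpleGraph.Walk.IsPath.nil,
      by simp [SimpleGraph.Walk.support_nil]; exact ⟨0, rfl⟩, fun h => absurd rfl h⟩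
  | succ m ih =>
    intro x hx
    by_cases h0 : x = 0
    · subst h0
      exact ⟨SimpleGraph.Walk.nil, SimpleGraph.Walk.IsPath.nil,
        by simp [SimpleGraph.Walk.support_nil]; exact ⟨0, rfl⟩, fun h => absurd rfl h⟩
    · have hy : (gh f)^[m] (gh f x) = 0 := by rwa [← Function.iterate_succ_apply]
      obtain ⟨q, hq, hsup, -⟩ := ih (gh f x) hy
      have hxy : x ≠ gh f x := by
        intro h
        exact h0 (gh_fix f hx h.symm)
      have hadj : (Gf f).Adj x (gh f x) := (adj_Gf f _ _).mpr ⟨hxy, Or.inl rfl⟩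
      have hxnot : x ∉ q.support := by
        intro hmem
        obtain ⟨k, hk⟩ := hsup x hmem
        rw [← Function.iterate_succ_apply] at hk
        exact no_cycle f hf h0 (Nat.succ_pos k) hk.symm
      refine ⟨SimpleGraph.Walk.cons hadj q, SimpleGraph.Walk.IsPath.cons hq hxnot, ?_, ?_⟩
      · intro z hz
        rw [SimpleGraph.Walk.support_cons, List.mem_cons] at hz
        rcases hz with rfl | hz
        · exact ⟨0, rfl⟩
        · obtain ⟨k, hk⟩ := hsup z hz
          exact ⟨k + 1, by rw [Function.iterate_succ_apply, ← hk]⟩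
      · intro _
        rw [SimpleGraph.Walk.getVert_cons_succ, SimpleGraph.Walk.getVert_zero]

lemma par_Gf (f : Fin n → Fin (n+1)) (hf : Acyc f) {x : Fin (n+1)} (hx : x ≠ 0) :
    par (Gf f) x = gh f x := by
  have ht := Gf_isTree f hf
  obtain ⟨m, hm⟩ := hf x
  obtain ⟨q, hq, -, hv⟩ := iter_walk f hf m x hm
  rw [par_eq _ ht, ← pathTo_unique _ ht q hq]
  exact hv hx

lemma fpar_Gf (f : Fin n → Fin (n+1)) (hf : Acyc f) : fpar (Gf f) = f := by
  funext i
  show par (Gf f) i.succ = f i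
  rw [par_Gf f hf (Fin.succ_ne_zero i)]
  rfl

open scoped Classical in
lemma prod_edges (w : Fin (n+1) → Fin (n+1) → ℂ) (hw : ∀ i j, w i j = w j i)
    (f : Fin n → Fin (n+1)) (hf : Acyc f) :
    ∏ i : Fin n, w i.succ (f i) =
      ∏ p ∈ univ.filter (fun p : Fin (n+1) × Fin (n+1) => p.1 < p.2 ∧ (Gf f).Adj p.1 p.2),
        w p.1 p.2 := by
  have hfi : ∀ i : Fin n, f i ≠ i.succ := fun i h =>
    absurd (no_cycle f hf (Fin.succ_ne_zero i) (p := 1) one_pos (by simp [h])) not_false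
  refine Finset.prod_bij
    (fun i _ => if i.succ < f i then ((i.succ : Fin (n+1)), f i) else (f i, i.succ))
    ?_ ?_ ?_ ?_
  · intro i _
    simp only [Finset.mem_filter, Finset.mem_univ, true_and]
    by_cases h : i.succ < f i
    · rw [if_pos h]
      exact ⟨h, (adj_Gf f _ _).mpr ⟨fun he => hfi i he.symm, Or.inl rfl⟩⟩
    · rw [if_neg h]
      refine ⟨lt_of_le_of_ne (not_lt.mp h) (hfi i), (adj_Gf f _ _).mpr ⟨hfi i, Or.inr rfl⟩⟩
  · intro a ha b hb heq
    have cyc2 : ∀ a b : Fin n, a.succ = f b → f a = b.succ → False := by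
      intro a b h1 h2
      refine no_cycle f hf (Fin.succ_ne_zero a) (p := 2) two_pos ?_
      show gh f (gh f a.succ) = a.succ
      rw [gh_succ, h2, gh_succ, ← h1]
    by_cases h1 : a.succ < f a <;> by_cases h2 : b.succ < f b
    · rw [if_pos h1, if_pos h2, Prod.mk.injEq] at heq
      exact Fin.succ_injective _ heq.1
    · rw [if_pos h1, if_neg h2, Prod.mk.injEq] at heq
      exact absurd (cyc2 a b heq.1 heq.2) not_false
    · rw [if_neg h1, if_pos h2, Prod.mk.injEq] at heq
      exact absurd (cyc2 a b heq.2 heq.1) not_false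
    · rw [if_neg h1, if_neg h2, Prod.mk.injEq] at heq
      exact Fin.succ_injective _ heq.2
  · intro p hp
    simp only [Finset.mem_filter, Finset.mem_univ, true_and] at hp
    obtain ⟨hlt, hadj⟩ := hp
    obtain ⟨hne, h | h⟩ := (adj_Gf f _ _).mp hadj
    · have h0 : p.1 ≠ 0 := by
        rintro h0
        rw [h0, gh_zero] at h
        exact hne (h0.trans h)
      refine ⟨(p.1).pred h0, Finset.mem_univ _, ?_⟩
      have hs : ((p.1).pred h0).succ = p.1 := Fin.succ_pred _ _
      have hfval : f ((p.1).pred h0) = p.2 := by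
        rw [← gh_succ f ((p.1).pred h0), hs, h]
      show (if (p.1.pred h0).succ < f (p.1.pred h0) then ((p.1.pred h0).succ, f (p.1.pred h0))
        else (f (p.1.pred h0), (p.1.pred h0).succ)) = p
      rw [hfval, hs, if_pos hlt]
    · have h0 : p.2 ≠ 0 := by
        rintro h0
        rw [h0, gh_zero] at h
        exact hne (h.symm.trans h0.symm)
      refine ⟨(p.2).pred h0, Finset.mem_univ _, ?_⟩
      have hs : ((p.2).pred h0).succ = p.2 := Fin.succ_pred _ _
      have hfval : f ((p.2).pred h0) = p.1 := by
        rw [← gh_succ f ((p.2).pred h0), hs, h]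
      show (if (p.2.pred h0).succ < f (p.2.pred h0) then ((p.2.pred h0).succ, f (p.2.pred h0))
        else (f (p.2.pred h0), (p.2.pred h0).succ)) = p
      rw [hfval, hs, if_neg (by rw [not_lt]; exact le_of_lt hlt)]
  · intro i _
    by_cases h : i.succ < f i
    · rw [if_pos h]
    · rw [if_neg h]
      exact hw _ _

lemma row_decomp (w : Fin (n+1) → Fin (n+1) → ℂ) (i : Fin n) :
    (fun j => ((lap (n + 1) w).submatrix Fin.succ Fin.succ) i j) =
      ∑ k ∈ univ.erase (Fin.succ i), w i.succ k •
        (fun j : Fin n => ((if i = j then 1 else 0) - (if k = Fin.succ j then 1 else 0)) : Fin n → ℂ) := by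
  funext j
  simp only [Matrix.submatrix_apply, lap, Finset.sum_apply, Pi.smul_apply, smul_eq_mul]
  by_cases h : i = j
  · subst h
    simp only [if_pos rfl, Fin.succ_inj, mul_sub, mul_one]
    rw [if_pos trivial, Finset.sum_sub_distrib]
    have h2 : ∑ k ∈ univ.erase (Fin.succ i), w i.succ k * (if k = Fin.succ i then 1 else 0) = 0 := by
      apply Finset.sum_eq_zero
      intro k hk
      rw [if_neg (Finset.ne_of_mem_erase hk), mul_zero]
    rw [h2, sub_zero]
    simp [mul_one]
  · rw [if_neg (fun hh => h (Fin.succ_injective _ hh)), if_neg h]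
    have hmem : Fin.succ j ∈ univ.erase (Fin.succ i) := by
      simp [Finset.mem_erase, Fin.succ_inj, Ne.symm h]
    rw [Finset.sum_eq_single (Fin.succ j)]
    · simp
    · intro k hk hkj; simp [hkj, if_neg hkj]
    · intro h'; exact absurd hmem h'
lemma step1 (w : Fin (n+1) → Fin (n+1) → ℂ) :
    ((lap (n + 1) w).submatrix Fin.succ Fin.succ).det =
      ∑ f ∈ Fintype.piFinset (fun i : Fin n => univ.erase (Fin.succ i)),
        (∏ i, w i.succ (f i)) * (Mm f).det := by
  have hdet : ∀ (A : Matrix (Fin n) (Fin n) ℂ), A.det = Matrix.detRowAlternating A := fun _ => rfl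
  rw [hdet]
  have : ((lap (n + 1) w).submatrix Fin.succ Fin.succ) = fun i =>
      ∑ k ∈ univ.erase (Fin.succ i), w i.succ k •
        (fun j : Fin n => ((if i = j then 1 else 0) - (if k = Fin.succ j then 1 else 0)) : Fin n → ℂ) := by
    funext i j; exact congrFun (row_decomp w i) j
  rw [this]
  have hms := (Matrix.detRowAlternating : AlternatingMap ℂ (Fin n → ℂ) ℂ (Fin n)).toMultilinearMap.map_sum_finset
    (fun i k => w i.succ k • (fun j : Fin n => ((if i = j then 1 else 0) - (if k = Fin.succ j then 1 else 0)) : Fin n → ℂ))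
    (fun i : Fin n => univ.erase (Fin.succ i))
  refine hms.trans ?_
  apply Finset.sum_congr rfl
  intro f hf
  rw [MultilinearMap.map_smul_univ]
  rfl

open scoped Classical in
lemma sum_acyc (w : Fin (n+1) → Fin (n+1) → ℂ) (hw : ∀ i j, w i j = w j i) :
    ∑ f ∈ (Fintype.piFinset (fun i : Fin n => univ.erase (Fin.succ i))).filter Acyc,
      ∏ i, w i.succ (f i) = treePoly (n+1) w := by
  rw [treePoly]
  refine Finset.sum_bij (fun f _ => Gf f) ?_ ?_ ?_ ?_
  · intro f hf
    simp only [Finset.mem_filter, Finset.mem_univ, true_and] at hf ⊢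
    exact Gf_isTree f hf.2
  · intro a ha b hb heq
    simp only [Finset.mem_filter] at ha hb
    have h2 : Gf a = Gf b := heq
    calc a = fpar (Gf a) := (fpar_Gf a ha.2).symm
    _ = fpar (Gf b) := by rw [h2]
    _ = b := fpar_Gf b hb.2
  · intro t ht
    simp only [Finset.mem_filter, Finset.mem_univ, true_and] at ht
    refine ⟨fpar t, ?_, (Gf_fpar ht)⟩
    refine Finset.mem_filter.mpr ⟨?_, acyc_fpar ht⟩
    rw [Fintype.mem_piFinset]
    intro i
    rw [Finset.mem_erase]
    exact ⟨(par_adj ht (Fin.succ_ne_zero i)).ne', Finset.mem_univ _⟩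
  · intro f hf
    simp only [Finset.mem_filter] at hf
    exact prod_edges w hw f hf.2

end

/-- Weighted matrix-tree theorem: the principal minor of the weighted Laplacian of `Kₙ`
obtained by deleting the first row and column equals the spanning-tree polynomial. -/
theorem det_submatrix_lap_eq_treePoly (n : ℕ) (w : Fin (n + 1) → Fin (n + 1) → ℂ)
    (hw : ∀ i j, w i j = w j i) :
    ((lap (n + 1) w).submatrix Fin.succ Fin.succ).det = treePoly (n + 1) w := by
  classical
  calc ((lap (n + 1) w).submatrix Fin.succ Fin.succ).det
      = ∑ f ∈ Fintype.piFinset (fun i : Fin n => univ.erase (Fin.succ i)),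
        (∏ i, w i.succ (f i)) * (Mm f).det := step1 w
    _ = ∑ f ∈ Fintype.piFinset (fun i : Fin n => univ.erase (Fin.succ i)),
        (if Acyc f then ∏ i, w i.succ (f i) else 0) := by
        refine Finset.sum_congr rfl fun f _ => ?_
        by_cases h : Acyc f
        · rw [if_pos h, detMm_one f h, mul_one]
        · rw [if_neg h, detMm_zero f h, mul_zero]
    _ = ∑ f ∈ (Fintype.piFinset (fun i : Fin n => univ.erase (Fin.succ i))).filter Acyc,
        ∏ i, w i.succ (f i) := (Finset.sum_filter _ _).symm
    _ = treePoly (n + 1) w := sum_acyc w hw
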